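/- arXiv:1407.1249 — 6 statements merged into one kernel-verified Lean document; each statement's English description precedes it below -/
import Mathlib

section
/- The 9×12 rational matrix Mᵀ (given explicitly in the context) has rank 7. -/
open Matrix

def Mt : Matrix (Fin 9) (Fin 12) ℚ :=
  !![-135/4, 0, -60, 15/2, -45, -15, 5/4, -45/4, 75/2, 0, 0, 0; 108/11, 18/11, 0, 0, 0, 60/11, 46/11, -90/11, 156/11, 0, 0, 0; 27/4, 0, 12, -9/2, -9, 0, 0, 0, 0, 27/4, 18, 0; 0, 0, -10, 2/3, -2, 2, 1, 0, 6, 4, -1, 0; 0, 5/2, 29, 47/3, -23, 43, 13/2, 9/2, 25, 16, -71/2, 0; 0, 5, 45, 155/6, -40, 65, 10, 0, 50, 20, -115/2, 0; 0, 3/2, 18, 23/2, -3, 30, 11/2, 9/2, 9, 6, -33, 0; 0, 0, 0, 0, 0, 6, 7, 0, -6, 0, 0, 0; 0, 0, -6, -3, 0, 0, 0, 0, 0, 3, -6, 70]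

def Cm : Matrix (Fin 9) (Fin 7) ℚ :=
  !![1, 0, 0, 0, 0, 0, 0;
  0, 1, 0, 0, 0, 0, 0;
  0, 0, 1, 0, 0, 0, 0;
  0, 0, 0, 1, 0, 0, 0;
  0, 0, 0, 0, 1, 0, 0;
  0, 0, 0, 0, 0, 1, 0;
  0, 1/2, -8/11, -9/11, 21/11, -9/11, 0;
  8/15, 13/6, -16/33, -39/11, 58/11, -184/55, 0;
  0, 0, 0, 0, 0, 0, 1]

def Rm : Matrix (Fin 7) (Fin 12) ℚ :=
  !![-135/4, 0, -60, 15/2, -45, -15, 5/4, -45/4, 75/2, 0, 0, 0;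
  108/11, 18/11, 0, 0, 0, 60/11, 46/11, -90/11, 156/11, 0, 0, 0;
  27/4, 0, 12, -9/2, -9, 0, 0, 0, 0, 27/4, 18, 0;
  0, 0, -10, 2/3, -2, 2, 1, 0, 6, 4, -1, 0;
  0, 5/2, 29, 47/3, -23, 43, 13/2, 9/2, 25, 16, -71/2, 0;
  0, 5, 45, 155/6, -40, 65, 10, 0, 50, 20, -115/2, 0;
  0, 0, -6, -3, 0, 0, 0, 0, 0, 3, -6, 70]

def P7 : Matrix (Fin 7) (Fin 9) ℚ :=
  !![1, 0, 0, 0, 0, 0, 0, 0, 0;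
  0, 1, 0, 0, 0, 0, 0, 0, 0;
  0, 0, 1, 0, 0, 0, 0, 0, 0;
  0, 0, 0, 1, 0, 0, 0, 0, 0;
  0, 0, 0, 0, 1, 0, 0, 0, 0;
  0, 0, 0, 0, 0, 1, 0, 0, 0;
  0, 0, 0, 0, 0, 0, 0, 0, 1]

def Q7 : Matrix (Fin 12) (Fin 7) ℚ :=
  !![1, 0, 0, 0, 0, 0, 0;
  0, 1, 0, 0, 0, 0, 0;
  0, 0, 1, 0, 0, 0, 0;
  0, 0, 0, 1, 0, 0, 0;
  0, 0, 0, 0, 1, 0, 0;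
  0, 0, 0, 0, 0, 1, 0;
  0, 0, 0, 0, 0, 0, 1;
  0, 0, 0, 0, 0, 0, 0;
  0, 0, 0, 0, 0, 0, 0;
  0, 0, 0, 0, 0, 0, 0;
  0, 0, 0, 0, 0, 0, 0;
  0, 0, 0, 0, 0, 0, 0]

def Sm : Matrix (Fin 7) (Fin 7) ℚ :=
  !![-135/4, 0, -60, 15/2, -45, -15, 5/4;
  108/11, 18/11, 0, 0, 0, 60/11, 46/11;
  27/4, 0, 12, -9/2, -9, 0, 0;
  0, 0, -10, 2/3, -2, 2, 1;
  0, 5/2, 29, 47/3, -23, 43, 13/2;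
  0, 5, 45, 155/6, -40, 65, 10;
  0, 0, -6, -3, 0, 0, 0]

def Sim : Matrix (Fin 7) (Fin 7) ℚ :=
  !![-32/1215, -59/1701, 1252/18711, 580/2079, -892/6237, 2584/31185, -26/189;
  -8/405, 46/567, -1352/6237, -323/693, -2194/2079, 7288/10395, 44/63;
  1/162, 25/1296, 5/1782, -91/792, 71/1188, -43/1188, -1/72;
  -1/81, -25/648, -5/891, 91/396, -71/594, 43/594, -11/36;
  -13/2430, 517/27216, -185/3402, -89/1512, 73/2268, -253/11340, 47/1512;
  -2/135, -5/108, -2/297, 5/66, -1/99, 2/99, 1/9;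
  4/45, 22/63, -4/63, -4/7, 16/21, -52/105, -2/21]

@[simp] lemma cons_val_five' {m : ℕ} {α : Type*} (x : α) (u : Fin (m+5) → α) :
    Matrix.vecCons x u 5 = Matrix.vecHead (Matrix.vecTail (Matrix.vecTail (Matrix.vecTail (Matrix.vecTail u)))) := rfl
@[simp] lemma cons_val_six' {m : ℕ} {α : Type*} (x : α) (u : Fin (m+6) → α) :
    Matrix.vecCons x u 6 = Matrix.vecHead (Matrix.vecTail (Matrix.vecTail (Matrix.vecTail (Matrix.vecTail (Matrix.vecTail u))))) := rfl
@[simp] lemma cons_val_seven' {m : ℕ} {α : Type*} (x : α) (u : Fin (m+7) → α) :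
    Matrix.vecCons x u 7 = Matrix.vecHead (Matrix.vecTail (Matrix.vecTail (Matrix.vecTail (Matrix.vecTail (Matrix.vecTail (Matrix.vecTail u)))))) := rfl
@[simp] lemma cons_val_eight' {m : ℕ} {α : Type*} (x : α) (u : Fin (m+8) → α) :
    Matrix.vecCons x u 8 = Matrix.vecHead (Matrix.vecTail (Matrix.vecTail (Matrix.vecTail (Matrix.vecTail (Matrix.vecTail (Matrix.vecTail (Matrix.vecTail u))))))) := rfl
@[simp] lemma cons_val_nine' {m : ℕ} {α : Type*} (x : α) (u : Fin (m+9) → α) :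
    Matrix.vecCons x u 9 = Matrix.vecHead (Matrix.vecTail (Matrix.vecTail (Matrix.vecTail (Matrix.vecTail (Matrix.vecTail (Matrix.vecTail (Matrix.vecTail (Matrix.vecTail u)))))))) := rfl
@[simp] lemma cons_val_ten' {m : ℕ} {α : Type*} (x : α) (u : Fin (m+10) → α) :
    Matrix.vecCons x u 10 = Matrix.vecHead (Matrix.vecTail (Matrix.vecTail (Matrix.vecTail (Matrix.vecTail (Matrix.vecTail (Matrix.vecTail (Matrix.vecTail (Matrix.vecTail (Matrix.vecTail u))))))))) := rfl
@[simp] lemma cons_val_eleven' {m : ℕ} {α : Type*} (x : α) (u : Fin (m+11) → α) :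
    Matrix.vecCons x u 11 = Matrix.vecHead (Matrix.vecTail (Matrix.vecTail (Matrix.vecTail (Matrix.vecTail (Matrix.vecTail (Matrix.vecTail (Matrix.vecTail (Matrix.vecTail (Matrix.vecTail (Matrix.vecTail u)))))))))) := rfl

set_option maxHeartbeats 4000000

lemma hfac : Mt = Cm * Rm := by
  ext i j
  fin_cases i <;> fin_cases j <;>
    simp [Mt, Cm, Rm, Matrix.mul_apply, Fin.sum_univ_succ, Matrix.vecHead, Matrix.vecTail] <;> norm_num

lemma hPM : P7 * Mt = Rm := by
  ext i j
  fin_cases i <;> fin_cases j <;>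
    simp [Mt, P7, Rm, Matrix.mul_apply, Fin.sum_univ_succ, Matrix.vecHead, Matrix.vecTail] <;> norm_num

lemma hRQ : Rm * Q7 = Sm := by
  ext i j
  fin_cases i <;> fin_cases j <;>
    simp [Q7, Sm, Rm, Matrix.mul_apply, Fin.sum_univ_succ, Matrix.vecHead, Matrix.vecTail] <;> norm_num

lemma hSi : Sm * Sim = 1 := by
  ext i j
  fin_cases i <;> fin_cases j <;>
    simp [Sm, Sim, Matrix.mul_apply, Fin.sum_univ_succ, Matrix.one_apply] <;> norm_num

theorem stmt0 : Mt.rank = 7 := by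
  have hle : Mt.rank ≤ 7 := by
    calc Mt.rank = (Cm * Rm).rank := by rw [hfac]
    _ ≤ Cm.rank := Matrix.rank_mul_le_left Cm Rm
    _ ≤ Fintype.card (Fin 7) := Matrix.rank_le_card_width Cm
    _ = 7 := by simp
  have hge : 7 ≤ Mt.rank := by
    have hu : IsUnit Sm := (Matrix.isUnit_iff_isUnit_det Sm).mpr (Matrix.isUnit_det_of_right_inverse hSi)
    have h7 : Sm.rank = 7 := by
      rw [Matrix.rank_of_isUnit Sm hu]; simp
    calc (7 : ℕ) = Sm.rank := h7.symm
    _ = ((P7 * Mt) * Q7).rank := by rw [hPM, hRQ]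
    _ ≤ (P7 * Mt).rank := Matrix.rank_mul_le_left _ _
    _ ≤ Mt.rank := Matrix.rank_mul_le_right _ _
  omega
end

section
/- The matrix product N · M is the zero 4×9 matrix, where M is the 12×9 matrix whose transpose is given in the context and N is the given 4×12 matrix. (This expresses d₀ ∘ d₀ = 0 in the weight-10 complex of ham⁰₂.) -/
open Matrix

def M : Matrix (Fin 12) (Fin 9) ℚ := Mt.transpose

def N : Matrix (Fin 4) (Fin 12) ℚ :=
  !![0, 140, 0, 0, 0, -15, 15, 30, 5/2, 0, 0, 0; -5, -4, 1/4, -11/2, 31/12, 31/6, -3, -2, 5/3, -1, 2, 0; -16, 32, -2, -12, 22/3, 58/3, -18, -12, -5/3, 0, 8, 0; 0, 0, 0, 42, 7, 0, 0, 0, 0, 0, 14, 3]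


private lemma cv5 (a b c d e f g h i : ℚ) : ![a,b,c,d,e,f,g,h,i] 5 = f := rfl
private lemma cv6 (a b c d e f g h i : ℚ) : ![a,b,c,d,e,f,g,h,i] 6 = g := rfl
private lemma cv7 (a b c d e f g h i : ℚ) : ![a,b,c,d,e,f,g,h,i] 7 = h := rfl
private lemma cv8 (a b c d e f g h i : ℚ) : ![a,b,c,d,e,f,g,h,i] 8 = i := rfl

set_option maxHeartbeats 4000000 in
theorem stmt2 : N * M = 0 := by
  have hM : M = !![-135/4, 108/11, 27/4, 0, 0, 0, 0, 0, 0; 0, 18/11, 0, 0, 5/2, 5, 3/2, 0, 0; -60, 0, 12, -10, 29, 45, 18, 0, -6; 15/2, 0, -9/2, 2/3, 47/3, 155/6, 23/2, 0, -3; -45, 0, -9, -2, -23, -40, -3, 0, 0; -15, 60/11, 0, 2, 43, 65, 30, 6, 0; 5/4, 46/11, 0, 1, 13/2, 10, 11/2, 7, 0; -45/4, -90/11, 0, 0, 9/2, 0, 9/2, 0, 0; 75/2, 156/11, 0, 6, 25, 50, 9, -6, 0; 0, 0, 27/4, 4, 16, 20, 6, 0, 3; 0, 0, 18, -1, -71/2,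 -115/2, -33, 0, -6; 0, 0, 0, 0, 0, 0, 0, 0, 70] := by
    unfold M Mt
    ext i j
    fin_cases i <;> fin_cases j <;> rfl
  rw [hM]
  unfold N
  ext i j
  fin_cases i <;> fin_cases j <;>
    simp [Matrix.mul_apply, Fin.sum_univ_succ, cv5, cv6, cv7, cv8] <;> norm_num
end

section
/- The vector h = (0,0,0,0,0,0,0,3,-36,-72,-3,14) ∈ ℚ¹² does NOT lie in the column space of the 12×9 matrix M (equivalently, h is not in the range of the linear map ℚ⁹ → ℚ¹² given by M). -/
open Matrix

def h : Fin 12 → ℚ := ![0, 0, 0, 0, 0, 0, 0, 3, -36, -72, -3, 14]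

theorem stmt5 : h ∉ LinearMap.range M.mulVecLin := by
  rintro ⟨x, hx⟩
  have hx' : M.mulVec x = h := hx
  have key : ![(32:ℚ),2616,-21,42,-25,-252,216,504,0,0,0,0] ⬝ᵥ M.mulVec x
      = ![(32:ℚ),2616,-21,42,-25,-252,216,504,0,0,0,0] ⬝ᵥ h := by rw [hx']
  rw [Matrix.dotProduct_mulVec] at key
  simp [M, Mt, h, Matrix.vecMul, dotProduct, Fin.sum_univ_succ, Matrix.transpose,
    Matrix.cons_val_succ, Matrix.cons_val_zero] at key
  norm_num at key
end

section
/- The 4×14 rational matrix N̄ (given explicitly in the context) has rank 4, i.e. full row rank. -/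
open Matrix

def Nb : Matrix (Fin 4) (Fin 14) ℚ :=
  !![0, -35, 0, 0, 0, -30, 0, -15, 25/2, 0, 0, 0, -5/2, 0; 11, -9, -39/8, -31/8, -61/2, -75, -10, -10, 85/2, -2/3, -20/3, 0, -1, -3; -16, 8, 9, 5, 52, 20, 8/3, -2, -55/3, 0, 8, 0, 1, 4; 0, 0, 63/2, 21/2, 84, 0, 0, 0, 0, 0, -14, 3, 0, 3]

def Esel : Matrix (Fin 14) (Fin 4) ℚ :=
  !![1,0,0,0; 0,1,0,0; 0,0,1,0; 0,0,0,0; 0,0,0,0; 0,0,0,0; 0,0,0,0;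
     0,0,0,0; 0,0,0,0; 0,0,0,0; 0,0,0,0; 0,0,0,1; 0,0,0,0; 0,0,0,0]

def Bsq : Matrix (Fin 4) (Fin 4) ℚ :=
  !![0, -35, 0, 0; 11, -9, -39/8, 0; -16, 8, 9, 0; 0, 0, 63/2, 3]

lemma hmul : Nb * Esel = Bsq := by
  ext i j
  fin_cases i <;> fin_cases j <;>
    simp [Nb, Esel, Bsq, Matrix.mul_apply, Fin.sum_univ_succ]

lemma hdet : Bsq.det ≠ 0 := by
  norm_num [Bsq, Matrix.det_succ_row_zero, Fin.sum_univ_succ, Matrix.cons_val_two, Matrix.cons_val_three,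
    Matrix.tail_cons, Matrix.head_cons, show (Fin.succAbove 1 2 : Fin 4) = 3 from rfl]

theorem stmt9 : Nb.rank = 4 := by
  refine le_antisymm ?_ ?_
  · simpa using Nb.rank_le_card_height
  · have h1 : Bsq.rank = 4 := by
      rw [Matrix.rank_of_isUnit Bsq ((Matrix.isUnit_iff_isUnit_det _).mpr
        (isUnit_iff_ne_zero.mpr hdet))]
      simp
    calc (4 : ℕ) = Bsq.rank := h1.symm
    _ = (Nb * Esel).rank := by rw [hmul]
    _ ≤ Nb.rank := Matrix.rank_mul_le_left _ _
end

section
/- The vector h̄ = (0,0,0,0,0,0,-9,0,0,105,3,14,0,0) ∈ ℚ¹⁴ does NOT lie in the column space of the 14-row matrix M̄ whose transpose is given in the context (equivalently, h̄ is not in the range of the linear map ℚ¹⁸ → ℚ¹⁴ given by M̄). (This is the key step proving the Kotschick–Morita theorem: ω ∧ h represents a nontrivial class in H⁷(ham₂)₈.) -/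
open Matrix

def Mbt : Matrix (Fin 18) (Fin 14) ℚ :=
  !![135/4, 0, -20, -60, 15, 5/4, -135/4, -15, -15, 0, 0, 0, 0, 0; -18, -12, 0, 0, 0, 23/3, -45, 21, 10, 0, 0, 0, 0, 0; -27/4, 0, -20, 12, 3, 0, 0, 0, 0, 63/8, -18, 0, 0, 0; 0, 0, 2, -10, 2/3, 1, 2, -1/3, 2, -7, 1, 0, 0, 0; 0, -11/2, -17, 9, 71/12, 7/8, 51/8, 233/12, 10, -49/4, 4, 0, 0, 0; 0, -1/3, -9, 5, 49/18, 5/12, 55/4, 47/9, 19/3, -28/3, -1/6, 0, 0, 0; 0, -5/2, -20, 0, 65/12, -15/8, -75/8, 65/12, -5, 35/4, -25/2, 0, 0, 0; 0, 0, 0, 0, 0, 7, -18, -9, 6, 0, 0, 0, 0, 0; 0, 0, -2, -6, 0, 0, 0, 0, 0, -21/2, 6, 70, 0, 0; -1/2, 2, -2, 14/3, 1/3, 0, 0, 0, 0, 0, 0, 0, -28, -14/3; -5/2, 2, 0, 16/3, -1/3, 0, 0, 0, 0, 0, 0, 0, -28, -28/3; 0, 8, 0, 0, 0, -3, 0, 1,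 -6, 0, 0, 0, -112, 0; 0, 0, 0, 0, 0, -1, 15, -6, 0, -3/2, -3, 0, 48, -14; 0, 0, 0, 0, 0, -2/3, -1, -1, -2, 5/2, -1, 0, 4, -14/3; 0, 0, 0, 0, 4/3, 11/3, -45, 46/3, 0, 5/2, 11, 0, -136, 14; 0, 0, 2, 0, -1, -3/2, 123/8, -4, 0, -21/16, -33/16, 0, 42, -21/8; 0, 0, 0, 2, -1/3, -1/2, 39/8, -4/3, 0, 7/16, -13/16, 0, 14, -35/24; 0, 0, 0, 0, 0, 0, 0, 0, 0, 1, -1, -20/3, 0, 2]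

def Mb : Matrix (Fin 14) (Fin 18) ℚ := Mbt.transpose

def hb : Fin 14 → ℚ := ![0, 0, 0, 0, 0, 0, -9, 0, 0, 105, 3, 14, 0, 0]

theorem stmt13 : hb ∉ LinearMap.range Mb.mulVecLin := by
  rintro ⟨x, hx⟩
  have h2 := congrArg (fun v : Fin 14 → ℚ =>
    (![-64,36,63,-21,360,-2448,-336,-432,1200,0,0,0,0,0] : Fin 14 → ℚ) ⬝ᵥ v) hx
  simp only [Mb, Mbt, hb, mulVecLin_apply, mulVec, dotProduct, transpose_apply,
    Fin.sum_univ_succ, Fin.sum_univ_zero, Matrix.cons_val_zero, Matrix.cons_val_one,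
    Matrix.head_cons, Matrix.of_apply, Matrix.cons_val_succ] at h2
  ring_nf at h2
  norm_num at h2
end

section
/- For every vector v ∈ ℚ¹² with N.mulVec v = 0, there exist u ∈ ℚ⁹ and c ∈ ℚ such that v = M.mulVec u + c • h, where M, N, h are as in the context. (Every weight-10 5-cocycle of ham⁰₂ is cohomologous to a multiple of h = 3w₈ − 36w₉ − 72w₁₀ − 3w₁₁ + 14w₁₂.) -/
open Matrix

lemma sc2_0 : Fin.succ (0:Fin 2) = (1:Fin 3) := rfl
lemma sc2_1 : Fin.succ (1:Fin 2) = (2:Fin 3) := rfl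
lemma sc3_0 : Fin.succ (0:Fin 3) = (1:Fin 4) := rfl
lemma sc3_1 : Fin.succ (1:Fin 3) = (2:Fin 4) := rfl
lemma sc3_2 : Fin.succ (2:Fin 3) = (3:Fin 4) := rfl
lemma sc4_0 : Fin.succ (0:Fin 4) = (1:Fin 5) := rfl
lemma sc4_1 : Fin.succ (1:Fin 4) = (2:Fin 5) := rfl
lemma sc4_2 : Fin.succ (2:Fin 4) = (3:Fin 5) := rfl
lemma sc4_3 : Fin.succ (3:Fin 4) = (4:Fin 5) := rfl
lemma sc5_0 : Fin.succ (0:Fin 5) = (1:Fin 6) := rfl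
lemma sc5_1 : Fin.succ (1:Fin 5) = (2:Fin 6) := rfl
lemma sc5_2 : Fin.succ (2:Fin 5) = (3:Fin 6) := rfl
lemma sc5_3 : Fin.succ (3:Fin 5) = (4:Fin 6) := rfl
lemma sc5_4 : Fin.succ (4:Fin 5) = (5:Fin 6) := rfl
lemma sc6_0 : Fin.succ (0:Fin 6) = (1:Fin 7) := rfl
lemma sc6_1 : Fin.succ (1:Fin 6) = (2:Fin 7) := rfl
lemma sc6_2 : Fin.succ (2:Fin 6) = (3:Fin 7) := rfl
lemma sc6_3 : Fin.succ (3:Fin 6) = (4:Fin 7) := rfl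
lemma sc6_4 : Fin.succ (4:Fin 6) = (5:Fin 7) := rfl
lemma sc6_5 : Fin.succ (5:Fin 6) = (6:Fin 7) := rfl
lemma sc7_0 : Fin.succ (0:Fin 7) = (1:Fin 8) := rfl
lemma sc7_1 : Fin.succ (1:Fin 7) = (2:Fin 8) := rfl
lemma sc7_2 : Fin.succ (2:Fin 7) = (3:Fin 8) := rfl
lemma sc7_3 : Fin.succ (3:Fin 7) = (4:Fin 8) := rfl
lemma sc7_4 : Fin.succ (4:Fin 7) = (5:Fin 8) := rfl
lemma sc7_5 : Fin.succ (5:Fin 7) = (6:Fin 8) := rfl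
lemma sc7_6 : Fin.succ (6:Fin 7) = (7:Fin 8) := rfl
lemma sc8_0 : Fin.succ (0:Fin 8) = (1:Fin 9) := rfl
lemma sc8_1 : Fin.succ (1:Fin 8) = (2:Fin 9) := rfl
lemma sc8_2 : Fin.succ (2:Fin 8) = (3:Fin 9) := rfl
lemma sc8_3 : Fin.succ (3:Fin 8) = (4:Fin 9) := rfl
lemma sc8_4 : Fin.succ (4:Fin 8) = (5:Fin 9) := rfl
lemma sc8_5 : Fin.succ (5:Fin 8) = (6:Fin 9) := rfl
lemma sc8_6 : Fin.succ (6:Fin 8) = (7:Fin 9) := rfl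
lemma sc8_7 : Fin.succ (7:Fin 8) = (8:Fin 9) := rfl
lemma sc9_0 : Fin.succ (0:Fin 9) = (1:Fin 10) := rfl
lemma sc9_1 : Fin.succ (1:Fin 9) = (2:Fin 10) := rfl
lemma sc9_2 : Fin.succ (2:Fin 9) = (3:Fin 10) := rfl
lemma sc9_3 : Fin.succ (3:Fin 9) = (4:Fin 10) := rfl
lemma sc9_4 : Fin.succ (4:Fin 9) = (5:Fin 10) := rfl
lemma sc9_5 : Fin.succ (5:Fin 9) = (6:Fin 10) := rfl
lemma sc9_6 : Fin.succ (6:Fin 9) = (7:Fin 10) := rfl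
lemma sc9_7 : Fin.succ (7:Fin 9) = (8:Fin 10) := rfl
lemma sc9_8 : Fin.succ (8:Fin 9) = (9:Fin 10) := rfl
lemma sc10_0 : Fin.succ (0:Fin 10) = (1:Fin 11) := rfl
lemma sc10_1 : Fin.succ (1:Fin 10) = (2:Fin 11) := rfl
lemma sc10_2 : Fin.succ (2:Fin 10) = (3:Fin 11) := rfl
lemma sc10_3 : Fin.succ (3:Fin 10) = (4:Fin 11) := rfl
lemma sc10_4 : Fin.succ (4:Fin 10) = (5:Fin 11) := rfl
lemma sc10_5 : Fin.succ (5:Fin 10) = (6:Fin 11) := rfl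
lemma sc10_6 : Fin.succ (6:Fin 10) = (7:Fin 11) := rfl
lemma sc10_7 : Fin.succ (7:Fin 10) = (8:Fin 11) := rfl
lemma sc10_8 : Fin.succ (8:Fin 10) = (9:Fin 11) := rfl
lemma sc10_9 : Fin.succ (9:Fin 10) = (10:Fin 11) := rfl
lemma sc11_0 : Fin.succ (0:Fin 11) = (1:Fin 12) := rfl
lemma sc11_1 : Fin.succ (1:Fin 11) = (2:Fin 12) := rfl
lemma sc11_2 : Fin.succ (2:Fin 11) = (3:Fin 12) := rfl
lemma sc11_3 : Fin.succ (3:Fin 11) = (4:Fin 12) := rfl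
lemma sc11_4 : Fin.succ (4:Fin 11) = (5:Fin 12) := rfl
lemma sc11_5 : Fin.succ (5:Fin 11) = (6:Fin 12) := rfl
lemma sc11_6 : Fin.succ (6:Fin 11) = (7:Fin 12) := rfl
lemma sc11_7 : Fin.succ (7:Fin 11) = (8:Fin 12) := rfl
lemma sc11_8 : Fin.succ (8:Fin 11) = (9:Fin 12) := rfl
lemma sc11_9 : Fin.succ (9:Fin 11) = (10:Fin 12) := rfl
lemma sc11_10 : Fin.succ (10:Fin 11) = (11:Fin 12) := rfl

lemma cv1_1 {α : Type*} (x : α) (u : Fin 1 → α) : Matrix.vecCons x u (1:Fin 2) = u 0 := rfl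
lemma cv2_1 {α : Type*} (x : α) (u : Fin 2 → α) : Matrix.vecCons x u (1:Fin 3) = u 0 := rfl
lemma cv2_2 {α : Type*} (x : α) (u : Fin 2 → α) : Matrix.vecCons x u (2:Fin 3) = u 1 := rfl
lemma cv3_1 {α : Type*} (x : α) (u : Fin 3 → α) : Matrix.vecCons x u (1:Fin 4) = u 0 := rfl
lemma cv3_2 {α : Type*} (x : α) (u : Fin 3 → α) : Matrix.vecCons x u (2:Fin 4) = u 1 := rfl
lemma cv3_3 {α : Type*} (x : α) (u : Fin 3 → α) : Matrix.vecCons x u (3:Fin 4) = u 2 := rfl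
lemma cv4_1 {α : Type*} (x : α) (u : Fin 4 → α) : Matrix.vecCons x u (1:Fin 5) = u 0 := rfl
lemma cv4_2 {α : Type*} (x : α) (u : Fin 4 → α) : Matrix.vecCons x u (2:Fin 5) = u 1 := rfl
lemma cv4_3 {α : Type*} (x : α) (u : Fin 4 → α) : Matrix.vecCons x u (3:Fin 5) = u 2 := rfl
lemma cv4_4 {α : Type*} (x : α) (u : Fin 4 → α) : Matrix.vecCons x u (4:Fin 5) = u 3 := rfl
lemma cv5_1 {α : Type*} (x : α) (u : Fin 5 → α) : Matrix.vecCons x u (1:Fin 6) = u 0 := rfl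
lemma cv5_2 {α : Type*} (x : α) (u : Fin 5 → α) : Matrix.vecCons x u (2:Fin 6) = u 1 := rfl
lemma cv5_3 {α : Type*} (x : α) (u : Fin 5 → α) : Matrix.vecCons x u (3:Fin 6) = u 2 := rfl
lemma cv5_4 {α : Type*} (x : α) (u : Fin 5 → α) : Matrix.vecCons x u (4:Fin 6) = u 3 := rfl
lemma cv5_5 {α : Type*} (x : α) (u : Fin 5 → α) : Matrix.vecCons x u (5:Fin 6) = u 4 := rfl
lemma cv6_1 {α : Type*} (x : α) (u : Fin 6 → α) : Matrix.vecCons x u (1:Fin 7) = u 0 := rfl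
lemma cv6_2 {α : Type*} (x : α) (u : Fin 6 → α) : Matrix.vecCons x u (2:Fin 7) = u 1 := rfl
lemma cv6_3 {α : Type*} (x : α) (u : Fin 6 → α) : Matrix.vecCons x u (3:Fin 7) = u 2 := rfl
lemma cv6_4 {α : Type*} (x : α) (u : Fin 6 → α) : Matrix.vecCons x u (4:Fin 7) = u 3 := rfl
lemma cv6_5 {α : Type*} (x : α) (u : Fin 6 → α) : Matrix.vecCons x u (5:Fin 7) = u 4 := rfl
lemma cv6_6 {α : Type*} (x : α) (u : Fin 6 → α) : Matrix.vecCons x u (6:Fin 7) = u 5 := rfl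
lemma cv7_1 {α : Type*} (x : α) (u : Fin 7 → α) : Matrix.vecCons x u (1:Fin 8) = u 0 := rfl
lemma cv7_2 {α : Type*} (x : α) (u : Fin 7 → α) : Matrix.vecCons x u (2:Fin 8) = u 1 := rfl
lemma cv7_3 {α : Type*} (x : α) (u : Fin 7 → α) : Matrix.vecCons x u (3:Fin 8) = u 2 := rfl
lemma cv7_4 {α : Type*} (x : α) (u : Fin 7 → α) : Matrix.vecCons x u (4:Fin 8) = u 3 := rfl
lemma cv7_5 {α : Type*} (x : α) (u : Fin 7 → α) : Matrix.vecCons x u (5:Fin 8) = u 4 := rfl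
lemma cv7_6 {α : Type*} (x : α) (u : Fin 7 → α) : Matrix.vecCons x u (6:Fin 8) = u 5 := rfl
lemma cv7_7 {α : Type*} (x : α) (u : Fin 7 → α) : Matrix.vecCons x u (7:Fin 8) = u 6 := rfl
lemma cv8_1 {α : Type*} (x : α) (u : Fin 8 → α) : Matrix.vecCons x u (1:Fin 9) = u 0 := rfl
lemma cv8_2 {α : Type*} (x : α) (u : Fin 8 → α) : Matrix.vecCons x u (2:Fin 9) = u 1 := rfl
lemma cv8_3 {α : Type*} (x : α) (u : Fin 8 → α) : Matrix.vecCons x u (3:Fin 9) = u 2 := rfl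
lemma cv8_4 {α : Type*} (x : α) (u : Fin 8 → α) : Matrix.vecCons x u (4:Fin 9) = u 3 := rfl
lemma cv8_5 {α : Type*} (x : α) (u : Fin 8 → α) : Matrix.vecCons x u (5:Fin 9) = u 4 := rfl
lemma cv8_6 {α : Type*} (x : α) (u : Fin 8 → α) : Matrix.vecCons x u (6:Fin 9) = u 5 := rfl
lemma cv8_7 {α : Type*} (x : α) (u : Fin 8 → α) : Matrix.vecCons x u (7:Fin 9) = u 6 := rfl
lemma cv8_8 {α : Type*} (x : α) (u : Fin 8 → α) : Matrix.vecCons x u (8:Fin 9) = u 7 := rfl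
lemma cv9_1 {α : Type*} (x : α) (u : Fin 9 → α) : Matrix.vecCons x u (1:Fin 10) = u 0 := rfl
lemma cv9_2 {α : Type*} (x : α) (u : Fin 9 → α) : Matrix.vecCons x u (2:Fin 10) = u 1 := rfl
lemma cv9_3 {α : Type*} (x : α) (u : Fin 9 → α) : Matrix.vecCons x u (3:Fin 10) = u 2 := rfl
lemma cv9_4 {α : Type*} (x : α) (u : Fin 9 → α) : Matrix.vecCons x u (4:Fin 10) = u 3 := rfl
lemma cv9_5 {α : Type*} (x : α) (u : Fin 9 → α) : Matrix.vecCons x u (5:Fin 10) = u 4 := rfl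
lemma cv9_6 {α : Type*} (x : α) (u : Fin 9 → α) : Matrix.vecCons x u (6:Fin 10) = u 5 := rfl
lemma cv9_7 {α : Type*} (x : α) (u : Fin 9 → α) : Matrix.vecCons x u (7:Fin 10) = u 6 := rfl
lemma cv9_8 {α : Type*} (x : α) (u : Fin 9 → α) : Matrix.vecCons x u (8:Fin 10) = u 7 := rfl
lemma cv9_9 {α : Type*} (x : α) (u : Fin 9 → α) : Matrix.vecCons x u (9:Fin 10) = u 8 := rfl
lemma cv10_1 {α : Type*} (x : α) (u : Fin 10 → α) : Matrix.vecCons x u (1:Fin 11) = u 0 := rfl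
lemma cv10_2 {α : Type*} (x : α) (u : Fin 10 → α) : Matrix.vecCons x u (2:Fin 11) = u 1 := rfl
lemma cv10_3 {α : Type*} (x : α) (u : Fin 10 → α) : Matrix.vecCons x u (3:Fin 11) = u 2 := rfl
lemma cv10_4 {α : Type*} (x : α) (u : Fin 10 → α) : Matrix.vecCons x u (4:Fin 11) = u 3 := rfl
lemma cv10_5 {α : Type*} (x : α) (u : Fin 10 → α) : Matrix.vecCons x u (5:Fin 11) = u 4 := rfl
lemma cv10_6 {α : Type*} (x : α) (u : Fin 10 → α) : Matrix.vecCons x u (6:Fin 11) = u 5 := rfl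
lemma cv10_7 {α : Type*} (x : α) (u : Fin 10 → α) : Matrix.vecCons x u (7:Fin 11) = u 6 := rfl
lemma cv10_8 {α : Type*} (x : α) (u : Fin 10 → α) : Matrix.vecCons x u (8:Fin 11) = u 7 := rfl
lemma cv10_9 {α : Type*} (x : α) (u : Fin 10 → α) : Matrix.vecCons x u (9:Fin 11) = u 8 := rfl
lemma cv10_10 {α : Type*} (x : α) (u : Fin 10 → α) : Matrix.vecCons x u (10:Fin 11) = u 9 := rfl
lemma cv11_1 {α : Type*} (x : α) (u : Fin 11 → α) : Matrix.vecCons x u (1:Fin 12) = u 0 := rfl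
lemma cv11_2 {α : Type*} (x : α) (u : Fin 11 → α) : Matrix.vecCons x u (2:Fin 12) = u 1 := rfl
lemma cv11_3 {α : Type*} (x : α) (u : Fin 11 → α) : Matrix.vecCons x u (3:Fin 12) = u 2 := rfl
lemma cv11_4 {α : Type*} (x : α) (u : Fin 11 → α) : Matrix.vecCons x u (4:Fin 12) = u 3 := rfl
lemma cv11_5 {α : Type*} (x : α) (u : Fin 11 → α) : Matrix.vecCons x u (5:Fin 12) = u 4 := rfl
lemma cv11_6 {α : Type*} (x : α) (u : Fin 11 → α) : Matrix.vecCons x u (6:Fin 12) = u 5 := rfl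
lemma cv11_7 {α : Type*} (x : α) (u : Fin 11 → α) : Matrix.vecCons x u (7:Fin 12) = u 6 := rfl
lemma cv11_8 {α : Type*} (x : α) (u : Fin 11 → α) : Matrix.vecCons x u (8:Fin 12) = u 7 := rfl
lemma cv11_9 {α : Type*} (x : α) (u : Fin 11 → α) : Matrix.vecCons x u (9:Fin 12) = u 8 := rfl
lemma cv11_10 {α : Type*} (x : α) (u : Fin 11 → α) : Matrix.vecCons x u (10:Fin 12) = u 9 := rfl
lemma cv11_11 {α : Type*} (x : α) (u : Fin 11 → α) : Matrix.vecCons x u (11:Fin 12) = u 10 := rfl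

theorem stmt16 :
    ∀ v : Fin 12 → ℚ, N.mulVec v = 0 →
      ∃ (u : Fin 9 → ℚ) (c : ℚ), v = M.mulVec u + c • h := by
  intro v hv
  have e0 := congrFun hv 0
  have e1 := congrFun hv 1
  have e2 := congrFun hv 2
  have e3 := congrFun hv 3
  simp [N, Matrix.mulVec, dotProduct, Fin.sum_univ_succ, sc2_0, sc2_1, sc3_0, sc3_1, sc3_2, sc4_0, sc4_1, sc4_2, sc4_3, sc5_0, sc5_1, sc5_2, sc5_3, sc5_4, sc6_0, sc6_1, sc6_2, sc6_3, sc6_4, sc6_5, sc7_0, sc7_1, sc7_2, sc7_3, sc7_4, sc7_5, sc7_6, sc8_0, sc8_1, sc8_2, sc8_3, sc8_4, sc8_5, sc8_6, sc8_7, sc9_0, sc9_1, sc9_2, sc9_3, sc9_4, sc9_5, sc9_6, sc9_7, sc9_8, sc10_0, sc10_1, sc10_2, sc10_3, sc10_4, sc10_5, sc10_6, sc10_7, sc10_8, sc10_9, sc11_0, sc11_1, sc11_2, sc11_3, sc11_4, sc11_5, sc11_6, sc11_7, sc11_8, sc11_9, sc11_10] at e0 e1 e2 e3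
  have key : ∀ u : Fin 9 → ℚ, u 0 = ((-91:ℚ)/3645) * v 4 + ((-293:ℚ)/10206) * v 5 + ((463:ℚ)/5670) * v 6 + ((-137:ℚ)/8505) * v 7 + ((-2279:ℚ)/102060) * v 8 + ((92:ℚ)/8505) * v 9 + ((-422:ℚ)/25515) * v 10 + ((-16:ℚ)/8505) * v 11 → u 1 = ((-431:ℚ)/40824) * v 4 + ((-13043:ℚ)/571536) * v 5 + ((17501:ℚ)/63504) * v 6 + ((-9979:ℚ)/95256) * v 7 + ((-71341:ℚ)/1143072) * v 8 + ((643:ℚ)/23814) * v 9 + ((-2201:ℚ)/142884) * v 10 + ((-59:ℚ)/23814) * v 11 → u 2 = ((-601:ℚ)/56133) * v 4 + ((39407:ℚ)/785862) * v 5 + ((-823:ℚ)/7938) * v 6 + ((-293:ℚ)/130977) * v 7 + ((15709:ℚ)/1571724) * v 8 + ((-832:ℚ)/130977) * v 9 + ((20662:ℚ)/392931) * v 10 + ((626:ℚ)/130977) * v 11 → u 3 = ((4127:ℚ)/24948) * v 4 + ((5651:ℚ)/349272) * v 5 + ((-667:ℚ)/3528) * v 6 + ((34003:ℚ)/58212)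 * v 7 + ((270001:ℚ)/698544) * v 8 + ((-2491:ℚ)/14553) * v 9 + ((12827:ℚ)/87318) * v 10 + ((290:ℚ)/14553) * v 11 → u 4 = ((-3109:ℚ)/37422) * v 4 + ((-60715:ℚ)/523908) * v 5 + ((3707:ℚ)/5292) * v 6 + ((-2339:ℚ)/87318) * v 7 + ((-185921:ℚ)/1047816) * v 8 + ((3874:ℚ)/43659) * v 9 + ((-9799:ℚ)/130977) * v 10 + ((-446:ℚ)/43659) * v 11 → u 5 = ((8419:ℚ)/187110) * v 4 + ((45497:ℚ)/523908) * v 5 + ((-12221:ℚ)/26460) * v 6 + ((421:ℚ)/87318) * v 7 + ((553103:ℚ)/5239080) * v 8 + ((-11614:ℚ)/218295) * v 9 + ((27799:ℚ)/654885) * v 10 + ((1292:ℚ)/218295) * v 11 → u 6 = (0:ℚ) → u 7 = (0:ℚ) → u 8 = ((-1:ℚ)/2268) * v 4 + ((-25:ℚ)/31752) * v 5 + ((-5:ℚ)/3528) * v 6 + ((-29:ℚ)/5292) * v 7 + ((-155:ℚ)/63504) * v 8 + ((5:ℚ)/1323) * v 9 + ((-13:ℚ)/7938) * v 10 + ((37:ℚ)/2646)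 * v 11 →
      v = M.mulVec u + (((5:ℚ)/2268) * v 4 + ((125:ℚ)/31752) * v 5 + ((25:ℚ)/3528) * v 6 + ((145:ℚ)/5292) * v 7 + ((775:ℚ)/63504) * v 8 + ((-25:ℚ)/1323) * v 9 + ((65:ℚ)/7938) * v 10 + ((2:ℚ)/1323) * v 11) • h := by
    intro u q0 q1 q2 q3 q4 q5 q6 q7 q8
    funext i
    fin_cases i <;>
      simp [M, Mt, h, Matrix.mulVec, dotProduct, Fin.sum_univ_succ, sc2_0, sc2_1, sc3_0, sc3_1, sc3_2, sc4_0, sc4_1, sc4_2, sc4_3, sc5_0, sc5_1, sc5_2, sc5_3, sc5_4, sc6_0, sc6_1, sc6_2, sc6_3, sc6_4, sc6_5, sc7_0, sc7_1, sc7_2, sc7_3, sc7_4, sc7_5, sc7_6, sc8_0, sc8_1, sc8_2, sc8_3, sc8_4, sc8_5, sc8_6, sc8_7, sc9_0, sc9_1, sc9_2, sc9_3, sc9_4, sc9_5, sc9_6, sc9_7, sc9_8, sc10_0, sc10_1, sc10_2, sc10_3, sc10_4, sc10_5, sc10_6, sc10_7, sc10_8, sc10_9, sc11_0, sc11_1,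 sc11_2, sc11_3, sc11_4, sc11_5, sc11_6, sc11_7, sc11_8, sc11_9, sc11_10, cv1_1, cv2_1, cv2_2, cv3_1, cv3_2, cv3_3, cv4_1, cv4_2, cv4_3, cv4_4, cv5_1, cv5_2, cv5_3, cv5_4, cv5_5, cv6_1, cv6_2, cv6_3, cv6_4, cv6_5, cv6_6, cv7_1, cv7_2, cv7_3, cv7_4, cv7_5, cv7_6, cv7_7, cv8_1, cv8_2, cv8_3, cv8_4, cv8_5, cv8_6, cv8_7, cv8_8, cv9_1, cv9_2, cv9_3, cv9_4, cv9_5, cv9_6, cv9_7, cv9_8, cv9_9, cv10_1, cv10_2, cv10_3, cv10_4, cv10_5, cv10_6, cv10_7, cv10_8, cv10_9, cv10_10, cv11_1, cv11_2, cv11_3, cv11_4, cv11_5, cv11_6, cv11_7, cv11_8, cv11_9, cv11_10, cv11_11]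
    · simp only [q0, q1, q2, q3, q4, q5, q6, q7, q8]
      linear_combination (((-1:ℚ)/7)) * e1 + (((-1:ℚ)/56)) * e2 + (((-1:ℚ)/42)) * e3
    · simp only [q0, q1, q2, q3, q4, q5, q6, q7, q8]
      linear_combination (((1:ℚ)/140)) * e0
    · simp only [q0, q1, q2, q3, q4, q5, q6, q7, q8]
      linear_combination (((4:ℚ)/35)) * e0 + (((8:ℚ)/7)) * e1 + (((-5:ℚ)/14)) * e2 + (((1:ℚ)/21)) * e3
    · simp only [q0, q1, q2, q3, q4, q5, q6, q7, q8]
      linear_combination (((1:ℚ)/42)) * e3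
    · simp only [q0, q1, q2, q3, q4, q5, q6, q7, q8]
      ring
    · simp only [q0, q1, q2, q3, q4, q5, q6, q7, q8]
      ring
    · simp only [q0, q1, q2, q3, q4, q5, q6, q7, q8]
      ring
    · simp only [q0, q1, q2, q3, q4, q5, q6, q7, q8]
      ring
    · simp only [q0, q1, q2, q3, q4, q5, q6, q7, q8]
      ring
    · simp only [q0, q1, q2, q3, q4, q5, q6, q7, q8]
      ring
    · simp only [q0, q1, q2, q3, q4, q5, q6, q7, q8]
      ring
    · simp only [q0, q1, q2, q3, q4, q5, q6, q7, q8]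
      ring
  exact ⟨_, _, key ![((-91:ℚ)/3645) * v 4 + ((-293:ℚ)/10206) * v 5 + ((463:ℚ)/5670) * v 6 + ((-137:ℚ)/8505) * v 7 + ((-2279:ℚ)/102060) * v 8 + ((92:ℚ)/8505) * v 9 + ((-422:ℚ)/25515) * v 10 + ((-16:ℚ)/8505) * v 11, ((-431:ℚ)/40824) * v 4 + ((-13043:ℚ)/571536) * v 5 + ((17501:ℚ)/63504) * v 6 + ((-9979:ℚ)/95256) * v 7 + ((-71341:ℚ)/1143072) * v 8 + ((643:ℚ)/23814) * v 9 + ((-2201:ℚ)/142884) * v 10 + ((-59:ℚ)/23814) * v 11, ((-601:ℚ)/56133) * v 4 + ((39407:ℚ)/785862) * v 5 + ((-823:ℚ)/7938) * v 6 + ((-293:ℚ)/130977) * v 7 + ((15709:ℚ)/1571724) * v 8 + ((-832:ℚ)/130977) * v 9 + ((20662:ℚ)/392931) * v 10 + ((626:ℚ)/130977) * v 11, ((4127:ℚ)/24948) * v 4 + ((5651:ℚ)/349272) * v 5 + ((-667:ℚ)/3528) * v 6 + ((34003:ℚ)/58212) * v 7 + ((270001:ℚ)/698544) * v 8 + ((-2491:ℚ)/14553)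 * v 9 + ((12827:ℚ)/87318) * v 10 + ((290:ℚ)/14553) * v 11, ((-3109:ℚ)/37422) * v 4 + ((-60715:ℚ)/523908) * v 5 + ((3707:ℚ)/5292) * v 6 + ((-2339:ℚ)/87318) * v 7 + ((-185921:ℚ)/1047816) * v 8 + ((3874:ℚ)/43659) * v 9 + ((-9799:ℚ)/130977) * v 10 + ((-446:ℚ)/43659) * v 11, ((8419:ℚ)/187110) * v 4 + ((45497:ℚ)/523908) * v 5 + ((-12221:ℚ)/26460) * v 6 + ((421:ℚ)/87318) * v 7 + ((553103:ℚ)/5239080) * v 8 + ((-11614:ℚ)/218295) * v 9 + ((27799:ℚ)/654885) * v 10 + ((1292:ℚ)/218295) * v 11, (0:ℚ), (0:ℚ), ((-1:ℚ)/2268) * v 4 + ((-25:ℚ)/31752) * v 5 + ((-5:ℚ)/3528) * v 6 + ((-29:ℚ)/5292) * v 7 + ((-155:ℚ)/63504) * v 8 + ((5:ℚ)/1323) * v 9 + ((-13:ℚ)/7938) * v 10 + ((37:ℚ)/2646) * v 11] rfl rfl rfl rfl rfl rfl rfl rfl rfl⟩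
end
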